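/- Let N be a free abelian group of rank n, let φ : ℤ^r → N be a surjective homomorphism with kernel L, and let S ⊆ Fin r be a subset of cardinality n such that the elements bᵢ = φ(eᵢ), i ∈ S, are ℤ-linearly independent. Let K_σ = { β ∈ L ⊗ ℚ : ⟨eⱼ*, β⟩ ∈ ℤ for all j ∉ S }, a subgroup of L ⊗ ℚ containing L (where eⱼ* is the j-th coordinate functional of ℚ^r restricted along L ⊗ ℚ ⊆ ℚ^r). For β ∈ K_σ set v(β) = Σ_{i∈S} { −⟨eᵢ*, β⟩ } · bᵢ ∈ N ⊗ ℚ, where {x} = x − ⌊x⌋ is the fractional part. Then v(β) lies in (the image of) N and belongs to Box(σ) = { v ∈ N : v = Σ_{i∈S} cᵢ bᵢ with 0 ≤ cᵢ < 1 }, and v induces a bijection from the quotient group K_σ / L onto Box(σ). -/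

import Mathlib

open scoped TensorProduct

/-- The coordinatewise embedding `ℤ^r → ℚ^r`. -/
def ratCastPi (r : ℕ) (v : Fin r → ℤ) : Fin r → ℚ := fun i => (v i : ℚ)

section Aux
variable {N : Type*} [AddCommGroup N] [Module ℤ N]

noncomputable def auxPhi (r : ℕ) (φ : (Fin r → ℤ) →ₗ[ℤ] N) : (Fin r → ℚ) →ₗ[ℚ] ℚ ⊗[ℤ] N where
  toFun β := ∑ i, β i • ((1:ℚ) ⊗ₜ[ℤ] φ (Pi.single i 1))
  map_add' x y := by simp [add_smul, Finset.sum_add_distrib]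
  map_smul' c x := by simp [mul_smul, Finset.smul_sum]

lemma auxPhi_apply (r : ℕ) (φ : (Fin r → ℤ) →ₗ[ℤ] N) (β : Fin r → ℚ) :
    auxPhi r φ β = ∑ i, β i • ((1:ℚ) ⊗ₜ[ℤ] φ (Pi.single i 1)) := rfl

lemma tmul_single (r : ℕ) (φ : (Fin r → ℤ) →ₗ[ℤ] N) (i : Fin r) (k : ℤ) :
    ((1:ℚ) ⊗ₜ[ℤ] φ (Pi.single i k) : ℚ ⊗[ℤ] N)
      = ((k : ℚ)) • ((1:ℚ) ⊗ₜ[ℤ] φ (Pi.single i 1)) := by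
  have hadd : ∀ a b : ℤ, (Pi.single i (a + b) : Fin r → ℤ)
      = Pi.single i a + Pi.single i b := by
    intro a b; ext j; by_cases hj : j = i <;> simp [Pi.single_apply, hj]
  induction k using Int.induction_on with
  | zero => simp
  | succ n ih =>
      rw [hadd, map_add, TensorProduct.tmul_add, ih]
      push_cast
      rw [add_smul, one_smul]
  | pred n ih =>
      rw [show (-(n:ℤ) - 1) = (-(n:ℤ)) + (-1) by ring, hadd, map_add,
        TensorProduct.tmul_add, ih]
      have h1 : (Pi.single i (-1 : ℤ) : Fin r → ℤ) = -(Pi.single i 1) := by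
        ext j; by_cases hj : j = i <;> simp [Pi.single_apply, hj]
      rw [h1, map_neg, TensorProduct.tmul_neg]
      push_cast
      rw [add_smul]
      simp [neg_smul]

lemma auxPhi_cast (r : ℕ) (φ : (Fin r → ℤ) →ₗ[ℤ] N) (m : Fin r → ℤ) :
    auxPhi r φ (ratCastPi r m) = (1:ℚ) ⊗ₜ[ℤ] φ m := by
  rw [auxPhi_apply]
  show ∑ i, ((m i : ℚ)) • ((1:ℚ) ⊗ₜ[ℤ] φ (Pi.single i 1)) = _
  conv_rhs => rw [show m = ∑ i, Pi.single i (m i) from (Finset.univ_sum_single m).symm]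
  rw [map_sum, TensorProduct.tmul_sum]
  exact Finset.sum_congr rfl fun i _ => (tmul_single r φ i (m i)).symm

lemma tmul_one_injective [Module.Free ℤ N] :
    Function.Injective (fun w : N => ((1:ℚ) ⊗ₜ[ℤ] w : ℚ ⊗[ℤ] N)) := by
  classical
  let b := Module.Free.chooseBasis ℤ N
  intro x y h
  apply b.repr.injective
  ext i
  have h2 := congrArg (fun z => (b.baseChange ℚ).repr z i) h
  simp only [Module.Basis.baseChange_repr_tmul] at h2
  have h3 : ((b.repr x i : ℚ)) = (b.repr y i : ℚ) := by
    simpa [zsmul_eq_mul] using h2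
  exact_mod_cast h3

lemma exists_clear_den (r : ℕ) (g : Fin r → ℚ) :
    ∃ (d : ℤ) (m : Fin r → ℤ), 0 < d ∧ ∀ i, (d:ℚ) * g i = (m i : ℚ) := by
  classical
  set D : ℕ := ∏ j, (g j).den with hD
  have hDpos : 0 < D := Finset.prod_pos fun j _ => (g j).pos
  refine ⟨(D:ℤ), fun i => ((D / (g i).den : ℕ) : ℤ) * (g i).num,
    by exact_mod_cast hDpos, fun i => ?_⟩
  have hdvd : (g i).den ∣ D := Finset.dvd_prod_of_mem _ (Finset.mem_univ i)
  obtain ⟨t, ht⟩ := hdvd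
  have htq : (D / (g i).den : ℕ) = t := by rw [ht]; exact Nat.mul_div_cancel_left t (g i).pos
  have key : (D:ℚ) * g i = (((D / (g i).den : ℕ) : ℤ) * (g i).num : ℚ) := by
    rw [htq]
    push_cast [ht]
    rw [mul_comm ((g i).den : ℚ) (t:ℚ), mul_assoc, Rat.den_mul_eq_num]
  simpa using key

end Aux

/-- With `φ : ℤ^r → N` surjective onto the rank-`n` free abelian group `N`,
`L = ker φ`, `S` of cardinality `n` with `(bᵢ = φ(eᵢ))_{i∈S}` ℤ-linearly independent, let
`K_σ = {β ∈ L ⊗ ℚ : ⟨eⱼ*, β⟩ ∈ ℤ ∀ j ∉ S}` (inside `ℚ^r`) and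
`Box(σ) = {v ∈ N : v = Σ_{i∈S} cᵢ bᵢ, 0 ≤ cᵢ < 1}` (read in `ℚ ⊗ N`). For `β ∈ K_σ` the
element `v(β) = Σ_{i∈S} {−βᵢ}·bᵢ` lies in `N` and belongs to `Box(σ)`, and `v` induces a
bijection `K_σ/L ≅ Box(σ)`: it is surjective onto `Box(σ)` and `v(β₁) = v(β₂)` iff
`β₁ − β₂ ∈ L`. -/
theorem box_parametrizes_Ksigma_mod_L
    {N : Type*} [AddCommGroup N] [Module ℤ N] [Module.Free ℤ N] [Module.Finite ℤ N]
    (n r : ℕ) (hn : Module.finrank ℤ N = n)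
    (φ : (Fin r → ℤ) →ₗ[ℤ] N) (hφ : Function.Surjective φ)
    (S : Finset (Fin r)) (hcard : S.card = n)
    (hli : LinearIndependent ℤ (fun i : S => φ (Pi.single (i : Fin r) 1)))
    (Kσ : Set (Fin r → ℚ))
    (hK : Kσ = {β | β ∈ Submodule.span ℚ
        (ratCastPi r '' ((LinearMap.ker φ : Submodule ℤ (Fin r → ℤ)) : Set (Fin r → ℤ))) ∧
        ∀ j ∉ S, ∃ k : ℤ, β j = (k : ℚ)})
    (Box : Set N)
    (hBox : Box = {w | ∃ c : Fin r → ℚ, (∀ i ∈ S, 0 ≤ c i ∧ c i < 1) ∧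
        ((1 : ℚ) ⊗ₜ[ℤ] w : ℚ ⊗[ℤ] N)
          = ∑ i ∈ S, c i • ((1 : ℚ) ⊗ₜ[ℤ] φ (Pi.single i 1))}) :
    (∀ β ∈ Kσ, ∃ w ∈ Box,
        ((1 : ℚ) ⊗ₜ[ℤ] w : ℚ ⊗[ℤ] N)
          = ∑ i ∈ S, Int.fract (-(β i)) • ((1 : ℚ) ⊗ₜ[ℤ] φ (Pi.single i 1))) ∧
    (∀ w ∈ Box, ∃ β ∈ Kσ,
        ((1 : ℚ) ⊗ₜ[ℤ] w : ℚ ⊗[ℤ] N)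
          = ∑ i ∈ S, Int.fract (-(β i)) • ((1 : ℚ) ⊗ₜ[ℤ] φ (Pi.single i 1))) ∧
    (∀ β₁ ∈ Kσ, ∀ β₂ ∈ Kσ,
        ((∑ i ∈ S, Int.fract (-(β₁ i)) •
            (((1 : ℚ) ⊗ₜ[ℤ] φ (Pi.single i 1)) : ℚ ⊗[ℤ] N))
          = ∑ i ∈ S, Int.fract (-(β₂ i)) • ((1 : ℚ) ⊗ₜ[ℤ] φ (Pi.single i 1)))
        ↔ ∃ l ∈ LinearMap.ker φ, β₁ - β₂ = ratCastPi r l) := by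
  classical
  -- elements of the span are killed by auxPhi
  have hker0 : ∀ β ∈ Submodule.span ℚ
      (ratCastPi r '' ((LinearMap.ker φ : Submodule ℤ (Fin r → ℤ)) : Set (Fin r → ℤ))),
      auxPhi r φ β = 0 := by
    intro β hβ
    have hle : Submodule.span ℚ
        (ratCastPi r '' ((LinearMap.ker φ : Submodule ℤ (Fin r → ℤ)) : Set (Fin r → ℤ)))
        ≤ LinearMap.ker (auxPhi r φ) := by
      rw [Submodule.span_le]
      rintro x ⟨l, hl, rfl⟩
      simp only [SetLike.mem_coe, LinearMap.mem_ker] at hl ⊢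
      rw [auxPhi_cast, hl, TensorProduct.tmul_zero]
    exact LinearMap.mem_ker.mp (hle hβ)
  -- conversely, anything killed by auxPhi is in the span
  have hspan : ∀ β : Fin r → ℚ, auxPhi r φ β = 0 → β ∈ Submodule.span ℚ
      (ratCastPi r '' ((LinearMap.ker φ : Submodule ℤ (Fin r → ℤ)) : Set (Fin r → ℤ))) := by
    intro β h0
    obtain ⟨d, m, hd, hm⟩ := exists_clear_den r β
    have hdQ : (d:ℚ) ≠ 0 := by exact_mod_cast hd.ne'
    have hcast : ratCastPi r m = (d:ℚ) • β := by
      funext i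
      simp only [ratCastPi, Pi.smul_apply, smul_eq_mul]
      rw [← hm i]
    have h2 : φ m = 0 := by
      apply tmul_one_injective
      show (1:ℚ) ⊗ₜ[ℤ] φ m = (1:ℚ) ⊗ₜ[ℤ] (0:N)
      rw [← auxPhi_cast r φ m, hcast, map_smul, h0, smul_zero, TensorProduct.tmul_zero]
    have hβeq : β = ((d:ℚ))⁻¹ • ratCastPi r m := by
      rw [hcast, smul_smul, inv_mul_cancel₀ hdQ, one_smul]
    rw [hβeq]
    exact Submodule.smul_mem _ _ (Submodule.subset_span
      ⟨m, by simp [LinearMap.mem_ker, h2], rfl⟩)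
  -- linear independence over ℚ of the (1 ⊗ bᵢ), i ∈ S
  have hzero : ∀ g : Fin r → ℚ,
      (∑ i ∈ S, g i • ((1:ℚ) ⊗ₜ[ℤ] φ (Pi.single i 1) : ℚ ⊗[ℤ] N) = 0) →
      ∀ i ∈ S, g i = 0 := by
    intro g hg
    set g' : Fin r → ℚ := fun i => if i ∈ S then g i else 0 with hg'def
    have hsum : auxPhi r φ g' = 0 := by
      rw [auxPhi_apply,
        ← Finset.sum_subset S.subset_univ (fun x _ hx => by simp [hg'def, hx])]
      calc ∑ i ∈ S, g' i • ((1:ℚ) ⊗ₜ[ℤ] φ (Pi.single i 1) : ℚ ⊗[ℤ] N)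
          = ∑ i ∈ S, g i • ((1:ℚ) ⊗ₜ[ℤ] φ (Pi.single i 1) : ℚ ⊗[ℤ] N) :=
            Finset.sum_congr rfl fun i hi => by simp [hg'def, hi]
        _ = 0 := hg
    obtain ⟨d, m, hd, hm⟩ := exists_clear_den r g'
    have hdQ : (d:ℚ) ≠ 0 := by exact_mod_cast hd.ne'
    have hcast : ratCastPi r m = (d:ℚ) • g' := by
      funext i
      simp only [ratCastPi, Pi.smul_apply, smul_eq_mul]
      rw [← hm i]
    have hφm : φ m = 0 := by
      apply tmul_one_injective
      show (1:ℚ) ⊗ₜ[ℤ] φ m = (1:ℚ) ⊗ₜ[ℤ] (0:N)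
      rw [← auxPhi_cast r φ m, hcast, map_smul, hsum, smul_zero, TensorProduct.tmul_zero]
    have hmS : ∀ i, i ∉ S → m i = 0 := by
      intro i hi
      have h := hm i
      rw [hg'def] at h
      simp only [hi, if_false, mul_zero] at h
      exact_mod_cast h.symm
    have hsum2 : ∑ i ∈ S, φ (Pi.single i (m i)) = 0 := by
      have hmsum : m = ∑ i ∈ S, Pi.single i (m i) := by
        have h1 : ∑ i ∈ S, (Pi.single i (m i) : Fin r → ℤ)
            = ∑ i ∈ Finset.univ, Pi.single i (m i) :=
          Finset.sum_subset S.subset_univ (fun x _ hx => by rw [hmS x hx]; simp)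
        rw [h1, Finset.univ_sum_single]
      calc ∑ i ∈ S, φ (Pi.single i (m i)) = φ (∑ i ∈ S, Pi.single i (m i)) :=
            (map_sum φ _ _).symm
        _ = φ m := by rw [← hmsum]
        _ = 0 := hφm
    have hmzero : ∀ i : S, m (i:Fin r) = 0 := by
      apply Fintype.linearIndependent_iff.mp hli (fun i : S => m (i:Fin r))
      rw [← Finset.sum_attach S (fun i => φ (Pi.single i (m i)))] at hsum2
      rw [show (Finset.univ : Finset {x // x ∈ S}) = S.attach from rfl]
      refine Eq.trans (Finset.sum_congr rfl fun i _ => ?_) hsum2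
      rw [← φ.map_smul]
      congr 1
      ext j
      by_cases hj : j = (i:Fin r) <;> simp [Pi.single_apply, hj]
    intro i hi
    have h := hm i
    rw [hmzero ⟨i, hi⟩] at h
    have hg'0 : g' i = 0 := by
      rcases mul_eq_zero.mp (by rw [h]; norm_num : (d:ℚ) * g' i = 0) with h' | h'
      · exact absurd h' hdQ
      · exact h'
    rw [hg'def] at hg'0
    simpa [hi] using hg'0
  refine ⟨?_, ?_, ?_⟩
  · -- Part 1
    intro β hβ
    rw [hK] at hβ
    obtain ⟨hβspan, hβint⟩ := hβ
    set m : Fin r → ℤ := fun j => if h : j ∈ S then -⌊-(β j)⌋ else (hβint j h).choose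
      with hmdef
    have key : ((1:ℚ) ⊗ₜ[ℤ] φ m : ℚ ⊗[ℤ] N)
        = ∑ i ∈ S, Int.fract (-(β i)) • ((1:ℚ) ⊗ₜ[ℤ] φ (Pi.single i 1)) := by
      rw [← auxPhi_cast r φ m,
        show auxPhi r φ (ratCastPi r m) = auxPhi r φ (ratCastPi r m - β) by
          rw [map_sub, hker0 β hβspan, sub_zero],
        auxPhi_apply]
      rw [← Finset.sum_subset S.subset_univ]
      · refine Finset.sum_congr rfl fun i hi => ?_
        congr 1
        simp only [Pi.sub_apply, ratCastPi, hmdef, dif_pos hi]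
        rw [← Int.self_sub_floor]
        push_cast
        ring
      · intro x _ hx
        have hcs := (hβint x hx).choose_spec
        have hx0 : (ratCastPi r m - β) x = 0 := by
          simp only [Pi.sub_apply, ratCastPi, hmdef, dif_neg hx]
          rw [← hcs, sub_self]
        rw [hx0, zero_smul]
    refine ⟨φ m, ?_, key⟩
    rw [hBox]
    exact ⟨fun i => Int.fract (-(β i)),
      fun i _ => ⟨Int.fract_nonneg _, Int.fract_lt_one _⟩, key⟩
  · -- Part 2
    intro w hw
    rw [hBox] at hw
    obtain ⟨c, hc, hw⟩ := hw
    obtain ⟨m, rfl⟩ := hφ w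
    set β : Fin r → ℚ := ratCastPi r m - fun i => if i ∈ S then c i else 0 with hβdef
    have hβ0 : auxPhi r φ β = 0 := by
      rw [hβdef, map_sub, auxPhi_cast, hw, auxPhi_apply, sub_eq_zero,
        ← Finset.sum_subset S.subset_univ (fun x _ hx => by simp [hx])]
      exact Finset.sum_congr rfl fun i hi => by simp [hi]
    have hfr : ∀ i ∈ S, Int.fract (-(β i)) = c i := by
      intro i hi
      have hβi : β i = (m i : ℚ) - c i := by simp [hβdef, ratCastPi, hi]
      rw [hβi, show -((m i : ℚ) - c i) = c i - ((m i : ℤ) : ℚ) by push_cast; ring,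
        Int.fract_sub_intCast, Int.fract_eq_self.mpr ⟨(hc i hi).1, (hc i hi).2⟩]
    refine ⟨β, ?_, ?_⟩
    · rw [hK]
      refine ⟨hspan β hβ0, fun j hj => ⟨m j, ?_⟩⟩
      simp [hβdef, ratCastPi, hj]
    · rw [hw]
      exact (Finset.sum_congr rfl fun i hi => by rw [hfr i hi]).symm
  · -- Part 3
    intro β₁ hβ₁ β₂ hβ₂
    rw [hK] at hβ₁ hβ₂
    constructor
    · intro h
      have hg : ∀ i ∈ S, Int.fract (-(β₁ i)) = Int.fract (-(β₂ i)) := by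
        have hz := hzero (fun i => Int.fract (-(β₁ i)) - Int.fract (-(β₂ i))) ?_
        · intro i hi
          have := hz i hi
          linarith [this]
        · simp only [sub_smul]
          rw [Finset.sum_sub_distrib, h, sub_self]
      have hint : ∀ i, ∃ k : ℤ, β₁ i - β₂ i = (k:ℚ) := by
        intro i
        by_cases hi : i ∈ S
        · obtain ⟨z, hzz⟩ := Int.fract_eq_fract.mp (hg i hi)
          exact ⟨-z, by push_cast; linarith⟩
        · obtain ⟨k₁, hk₁⟩ := hβ₁.2 i hi
          obtain ⟨k₂, hk₂⟩ := hβ₂.2 i hi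
          exact ⟨k₁ - k₂, by rw [hk₁, hk₂]; push_cast; ring⟩
      set l : Fin r → ℤ := fun i => (hint i).choose with hldef
      have hcastl : ratCastPi r l = β₁ - β₂ := by
        funext i
        have := (hint i).choose_spec
        simp only [ratCastPi, hldef, Pi.sub_apply]
        rw [← this]
      have hφl : φ l = 0 := by
        apply tmul_one_injective
        show (1:ℚ) ⊗ₜ[ℤ] φ l = (1:ℚ) ⊗ₜ[ℤ] (0:N)
        rw [← auxPhi_cast r φ l, hcastl, map_sub, hker0 _ hβ₁.1, hker0 _ hβ₂.1, sub_zero,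
          TensorProduct.tmul_zero]
      exact ⟨l, LinearMap.mem_ker.mpr hφl, hcastl.symm⟩
    · rintro ⟨l, hl, hdiff⟩
      refine Finset.sum_congr rfl fun i hi => ?_
      congr 1
      have hβi : β₁ i = β₂ i + ((l i : ℤ) : ℚ) := by
        have h := congrFun hdiff i
        simp only [Pi.sub_apply, ratCastPi] at h
        linarith
      rw [hβi, show -(β₂ i + ((l i : ℤ) : ℚ)) = -β₂ i - ((l i : ℤ) : ℚ) by ring,
        Int.fract_sub_intCast]
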